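/- Let M be a complete R-module with a Δ-derivation ∂_M such that M is (q−1)-torsion free and M/(q−1)M is ℤ-torsion free. Then the canonical map ker(∂_M) → M/(q−1)M is injective. (Key step: the map induced by ∂_M on the (q−1)-adic graded piece Gr^n M → Gr^{n−1} M is multiplication by (p+1)^n − 1, which is injective under the hypotheses.) -/

import Mathlib

/-- The twisted integer (q-analog) `(k)_q = 1 + q + ⋯ + q^{k-1}`. -/
def qInt {R : Type*} [CommRing R] (q : R) (n : ℕ) : R := ∑ i ∈ Finset.range n, q ^ i

private lemma mem_span_smul_top_iff {R M : Type*} [CommRing R] [AddCommGroup M] [Module R M]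
    (r : R) (x : M) :
    x ∈ Ideal.span {r} • (⊤ : Submodule R M) ↔ ∃ t, x = r • t := by
  constructor
  · intro hx
    refine Submodule.smul_induction_on hx ?_ ?_
    · intro a ha m _
      obtain ⟨b, rfl⟩ := Ideal.mem_span_singleton.mp ha
      exact ⟨b • m, mul_smul r b m⟩
    · rintro x y ⟨t1, rfl⟩ ⟨t2, rfl⟩
      exact ⟨t1 + t2, by rw [smul_add]⟩
  · rintro ⟨t, rfl⟩
    exact Submodule.smul_mem_smul (Submodule.mem_span_singleton_self r) Submodule.mem_top

/-- Let `R = W[[q−1]]` (with `q = X+1`, so `q−1 = X`), `γ` the `W`-algebra endomorphism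
with `γ(q) = q^{p+1}` and `∂_Δ` the Δ-derivation of `R` with `∂_Δ(q) = (p)_q`.  Let `M` be
a `(q−1)`-adically complete `R`-module with a Δ-derivation `D`, such that `M` is
`(q−1)`-torsion free and `M/(q−1)M` is `ℤ`-torsion free.  Then the canonical map
`ker(D) → M/(q−1)M` is injective: if `D s = 0` and `s ∈ (q−1)M` then `s = 0`. -/
theorem stmt18 {W : Type*} [CommRing W] (p : ℕ) (hp : 0 < p)
    (γ : PowerSeries W →ₐ[W] PowerSeries W)
    (hγ : γ (PowerSeries.X + 1) = (PowerSeries.X + 1) ^ (p + 1))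
    (dΔ : PowerSeries W →ₗ[W] PowerSeries W)
    (hdΔ : ∀ α β : PowerSeries W, dΔ (α * β) = dΔ α * β + γ α * dΔ β)
    (hdΔq : dΔ (PowerSeries.X + 1) = qInt (PowerSeries.X + 1 : PowerSeries W) p)
    (M : Type*) [AddCommGroup M] [Module (PowerSeries W) M] [Module W M]
    [IsScalarTower W (PowerSeries W) M]
    (hcomp : IsAdicComplete (Ideal.span {(PowerSeries.X : PowerSeries W)}) M)
    (htf : ∀ s : M, (PowerSeries.X : PowerSeries W) • s = 0 → s = 0)
    (hZtf : ∀ n : ℤ, n ≠ 0 → ∀ s : M,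
      n • s ∈ (Ideal.span {(PowerSeries.X : PowerSeries W)}) •
          (⊤ : Submodule (PowerSeries W) M) →
        s ∈ (Ideal.span {(PowerSeries.X : PowerSeries W)}) •
          (⊤ : Submodule (PowerSeries W) M))
    (D : M →ₗ[W] M)
    (hD : ∀ (α : PowerSeries W) (s : M), D (α • s) = dΔ α • s + γ α • D s)
    (s : M) (hs : D s = 0)
    (hsX : s ∈ (Ideal.span {(PowerSeries.X : PowerSeries W)}) •
        (⊤ : Submodule (PowerSeries W) M)) :
    s = 0 := by
  set R := PowerSeries W
  set q : R := PowerSeries.X + 1 with hq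
  set u : R := qInt q (p + 1) with hu
  -- γ X = u * X
  have hγX : γ PowerSeries.X = u * PowerSeries.X := by
    have hX : (PowerSeries.X : R) = q - 1 := by rw [hq]; ring
    rw [hX, map_sub, map_one, hγ, ← geom_sum_mul, hq]
    simp [qInt, hu, hq]
  -- dΔ 1 = 0
  have hd1 : dΔ 1 = 0 := by
    have h := hdΔ 1 1
    rw [show γ (1 : PowerSeries W) = 1 from map_one γ] at h
    simp only [one_mul, mul_one] at h
    exact left_eq_add.mp h
  -- dΔ X = qInt q p
  have hdX : dΔ PowerSeries.X = qInt q p := by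
    have h : dΔ (PowerSeries.X + 1) = qInt q p := hdΔq
    rw [map_add, hd1, add_zero] at h
    exact h
  -- dΔ (X^(n+1)) = X^n * (qInt q p * ∑_{i<n+1} u^i)
  have hdpow : ∀ n : ℕ, dΔ (PowerSeries.X ^ (n + 1) : R)
      = PowerSeries.X ^ n * (qInt q p * ∑ i ∈ Finset.range (n + 1), u ^ i) := by
    intro n
    induction n with
    | zero => simp [hdX]
    | succ n ih =>
        have hs2 : ∑ i ∈ Finset.range (n + 1 + 1), u ^ i
            = u * ∑ i ∈ Finset.range (n + 1), u ^ i + 1 := geom_sum_succ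
        have hX2 : (PowerSeries.X ^ (n + 1 + 1) : R)
            = PowerSeries.X * PowerSeries.X ^ (n + 1) := by ring
        rw [hX2, hdΔ, ih, hdX, hγX, hs2]
        ring
  -- constant coefficients
  have hccq : PowerSeries.constantCoeff q = 1 := by simp [hq]
  have hccqInt : ∀ k : ℕ, PowerSeries.constantCoeff (qInt q k) = (k : W) := by
    intro k
    simp [qInt, map_sum, map_pow, hccq]
  have hccu : PowerSeries.constantCoeff u = (p + 1 : W) := by
    rw [hu, hccqInt]; push_cast; ring
  -- torsion-free iterated
  have htfn : ∀ (k : ℕ) (v : M), (PowerSeries.X : R) ^ k • v = 0 → v = 0 := by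
    intro k
    induction k with
    | zero => intro v hv; simpa using hv
    | succ k ih =>
        intro v hv
        rw [pow_succ, mul_comm, mul_smul] at hv
        exact ih v (htf _ hv)
  -- helper: X ∣ α → α • v ∈ span{X} • ⊤
  have hXsmul : ∀ (α : R) (v : M), (PowerSeries.X : R) ∣ α →
      α • v ∈ Ideal.span {(PowerSeries.X : R)} • (⊤ : Submodule R M) := by
    rintro α v ⟨β, rfl⟩
    rw [mem_span_smul_top_iff]
    exact ⟨β • v, mul_smul _ _ _⟩
  -- main induction: s ∈ X^(n+1) M
  have key : ∀ n : ℕ, ∃ t : M, s = ((PowerSeries.X : R) ^ (n + 1)) • t := by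
    intro n
    induction n with
    | zero =>
        obtain ⟨t, ht⟩ := (mem_span_smul_top_iff _ _).mp hsX
        exact ⟨t, by simpa using ht⟩
    | succ n ih =>
        obtain ⟨t, ht⟩ := ih
        set c : R := qInt q p * ∑ i ∈ Finset.range (n + 1), u ^ i with hc
        -- from D s = 0 get the relation
        have h1 : (0 : M) = ((PowerSeries.X : R) ^ n * c) • t
            + ((PowerSeries.X : R) ^ n * (u ^ (n + 1) * PowerSeries.X)) • D t := by
          have h := hD ((PowerSeries.X : R) ^ (n + 1)) t
          rw [← ht, hs] at h
          rw [hdpow n, map_pow, hγX] at h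
          rw [show ((u * PowerSeries.X : R)) ^ (n + 1)
              = PowerSeries.X ^ n * (u ^ (n + 1) * PowerSeries.X) from by ring] at h
          rw [← hc] at h
          exact h
        have h0 : (PowerSeries.X : R) ^ n
            • (c • t + (u ^ (n + 1) * PowerSeries.X) • D t) = 0 := by
          rw [smul_add, ← mul_smul, ← mul_smul]
          exact h1.symm
        have hz : c • t + (u ^ (n + 1) * PowerSeries.X) • D t = 0 := htfn n _ h0
        -- the integer m = (p+1)^(n+1) - 1
        set m : ℤ := ((p : ℤ) + 1) ^ (n + 1) - 1 with hm
        have hccc : PowerSeries.constantCoeff c = ((m : ℤ) : W) := by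
          rw [hc, map_mul, hccqInt, map_sum]
          have hterm : ∀ i ∈ Finset.range (n + 1),
              PowerSeries.constantCoeff (u ^ i) = ((p : W) + 1) ^ i := by
            intro i _
            rw [map_pow, hccu]
          rw [Finset.sum_congr rfl hterm]
          have hg := geom_sum_mul ((p : W) + 1) (n + 1)
          rw [show ((p : W) + 1) - 1 = (p : W) from by ring] at hg
          rw [hm]
          push_cast
          rw [mul_comm]
          exact hg
        have hdvd : (PowerSeries.X : R) ∣ (c - ((m : ℤ) : R)) := by
          rw [PowerSeries.X_dvd_iff, map_sub, hccc, map_intCast, sub_self]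
        have hmne : m ≠ 0 := by
          have h1 : (1 : ℤ) < ((p : ℤ) + 1) ^ (n + 1) :=
            one_lt_pow₀ (by omega) (by omega)
          omega
        -- m • t ∈ X M
        have hmem : m • t ∈ Ideal.span {(PowerSeries.X : R)} • (⊤ : Submodule R M) := by
          have hct : c • t = -((u ^ (n + 1) * PowerSeries.X) • D t) := by
            rw [eq_neg_iff_add_eq_zero]; exact hz
          have hmt : ((m : ℤ) : R) • t
              = -((c - ((m : ℤ) : R)) • t) - (u ^ (n + 1) * PowerSeries.X) • D t := by
            rw [sub_smul, hct]
            abel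
          rw [← Int.cast_smul_eq_zsmul R, hmt]
          refine Submodule.sub_mem _ (Submodule.neg_mem _ ?_) ?_
          · exact hXsmul _ _ hdvd
          · exact hXsmul _ _ ⟨u ^ (n + 1), mul_comm _ _⟩
        have ht2 := hZtf m hmne t hmem
        obtain ⟨t', ht'⟩ := (mem_span_smul_top_iff _ _).mp ht2
        refine ⟨t', ?_⟩
        rw [ht, ht', ← mul_smul, ← pow_succ]
  -- conclude by Hausdorff separation
  refine IsHausdorff.haus hcomp.toIsHausdorff s fun n => ?_
  rw [SModEq.zero]
  cases n with
  | zero => simp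
  | succ n =>
      obtain ⟨t, ht⟩ := key n
      rw [Ideal.span_singleton_pow]
      rw [mem_span_smul_top_iff]
      exact ⟨t, ht⟩
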